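/- arXiv:1409.4386 — 4 statements merged into one kernel-verified Lean document; each statement's English description precedes it below -/
import Mathlib

section
/- For an antichain poset P on [d], the centrally symmetric polytope Q^(sym)_{A_P} equals the Minkowski sum C_d + L, where C_d is the unit d-cube [0,1]^d in R^d and L is the closed line segment from the origin to the vector v = (-1,...,-1). Equivalently, Q^(sym)_{A_P} = { r_1 e_1 + ... + r_d e_d + r_{d+1} v : 0 ≤ r_i ≤ 1 for all i }. -/
open Pointwise

/-- For the antichain poset on [d], the centrally symmetric polytope
`Q^(sym)_{A_P} = conv([0,1]^d ∪ -[0,1]^d)` equals the Minkowski sum of the unit cube and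
the segment from the origin to `(-1,...,-1)`; equivalently it is the zonotope
`{ r_1 e_1 + ⋯ + r_d e_d + r_{d+1} v : 0 ≤ r_i ≤ 1 }`. -/
theorem stmt0 (d : ℕ) :
    (convexHull ℝ ({x : Fin d → ℝ | ∀ i, 0 ≤ x i ∧ x i ≤ 1} ∪
        (-{x : Fin d → ℝ | ∀ i, 0 ≤ x i ∧ x i ≤ 1})) =
      {x : Fin d → ℝ | ∀ i, 0 ≤ x i ∧ x i ≤ 1} +
        segment ℝ (0 : Fin d → ℝ) (fun _ => (-1 : ℝ))) ∧
    (convexHull ℝ ({x : Fin d → ℝ | ∀ i, 0 ≤ x i ∧ x i ≤ 1} ∪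
        (-{x : Fin d → ℝ | ∀ i, 0 ≤ x i ∧ x i ≤ 1})) =
      {x : Fin d → ℝ | ∃ r : Fin (d + 1) → ℝ, (∀ i, 0 ≤ r i ∧ r i ≤ 1) ∧
        ∀ j : Fin d, x j = r j.castSucc - r (Fin.last d)}) := by
  set C : Set (Fin d → ℝ) := {x : Fin d → ℝ | ∀ i, 0 ≤ x i ∧ x i ≤ 1} with hC
  set v : Fin d → ℝ := fun _ => (-1 : ℝ) with hv
  have hCIcc : C = Set.Icc (0 : Fin d → ℝ) 1 := by
    ext x
    simp [hC, Set.mem_Icc, Pi.le_def, forall_and]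
  have hconvC : Convex ℝ C := hCIcc ▸ convex_Icc _ _
  have hseg : ∀ y : Fin d → ℝ,
      y ∈ segment ℝ (0 : Fin d → ℝ) v ↔ ∃ t : ℝ, 0 ≤ t ∧ t ≤ 1 ∧ y = t • v := by
    intro y
    constructor
    · rintro ⟨a, b, ha, hb, hab, rfl⟩
      exact ⟨b, hb, by linarith, by simp⟩
    · rintro ⟨t, ht0, ht1, rfl⟩
      exact ⟨1 - t, t, by linarith, ht0, by ring, by simp⟩
  have h1 : convexHull ℝ (C ∪ (-C)) = C + segment ℝ (0 : Fin d → ℝ) v := by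
    apply Set.Subset.antisymm
    · apply convexHull_min _ (hconvC.add (convex_segment _ _))
      rintro x (hx | hx)
      · have := Set.add_mem_add hx (left_mem_segment ℝ (0 : Fin d → ℝ) v)
        simpa using this
      · have hx' : -x ∈ C := hx
        have hxv : x - v ∈ C := by
          intro i
          have := hx' i
          simp only [hC, Set.mem_setOf_eq, Pi.neg_apply] at this
          constructor <;> simp [hv] <;> linarith [this.1, this.2]
        have := Set.add_mem_add hxv (right_mem_segment ℝ (0 : Fin d → ℝ) v)
        simpa using this
    · rintro x ⟨c, hc, y, hy, rfl⟩
      obtain ⟨t, ht0, ht1, rfl⟩ := (hseg y).1 hy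
      have hc' : c + v ∈ -C := by
        intro i
        have := hc i
        constructor <;> simp [hv] <;> linarith [this.1, this.2]
      have hmemc : c ∈ convexHull ℝ (C ∪ (-C)) :=
        subset_convexHull ℝ _ (Or.inl hc)
      have hmemcv : c + v ∈ convexHull ℝ (C ∪ (-C)) :=
        subset_convexHull ℝ _ (Or.inr hc')
      have := (convex_convexHull ℝ (C ∪ (-C))) hmemc hmemcv
        (by linarith : (0:ℝ) ≤ 1 - t) ht0 (by ring)
      have heq : (1 - t) • c + t • (c + v) = c + t • v := by
        ext i; simp; ring
      rwa [heq] at this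
  refine ⟨h1, ?_⟩
  rw [h1]
  ext x
  constructor
  · rintro ⟨c, hc, y, hy, rfl⟩
    obtain ⟨t, ht0, ht1, rfl⟩ := (hseg y).1 hy
    refine ⟨Fin.snoc c t, ?_, ?_⟩
    · intro i
      refine Fin.lastCases ?_ ?_ i
      · simpa using ⟨ht0, ht1⟩
      · intro j; simpa using hc j
    · intro j
      simp [Fin.snoc_castSucc, Fin.snoc_last, hv]
      ring
  · rintro ⟨r, hr, hx⟩
    refine ⟨fun j => r j.castSucc, fun j => hr _, r (Fin.last d) • v, ?_, ?_⟩
    · exact (hseg _).2 ⟨r (Fin.last d), (hr _).1, (hr _).2, rfl⟩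
    · ext j
      simp [hx j, hv]
      ring
end

section
/- Let P be an antichain poset on [d] and let Q = Q^(sym)_{A_P} be the convex hull of [0,1]^d ∪ (-[0,1]^d) in R^d. Then the Ehrhart polynomial of Q is i(Q, t) = (t+1)^{d+1} - t^{d+1}, i.e., the number of lattice points in the dilate tQ equals (t+1)^{d+1} - t^{d+1} for every positive integer t. -/
open Pointwise

lemma hullQ (d : ℕ) :
    convexHull ℝ ({x : Fin d → ℝ | ∀ i, 0 ≤ x i ∧ x i ≤ 1} ∪
      (-{x : Fin d → ℝ | ∀ i, 0 ≤ x i ∧ x i ≤ 1})) =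
    {y : Fin d → ℝ | (∀ i j, y i - y j ≤ 1) ∧ ∀ i, -1 ≤ y i ∧ y i ≤ 1} := by
  apply subset_antisymm
  · apply convexHull_min
    · rintro y (hy | hy)
      · exact ⟨fun i j => by have := (hy i).2; have := (hy j).1; linarith,
          fun i => ⟨by linarith [(hy i).1], (hy i).2⟩⟩
      · rw [Set.mem_neg] at hy
        have hy' : ∀ i, 0 ≤ -(y i) ∧ -(y i) ≤ 1 := hy
        exact ⟨fun i j => by have := (hy' i).1; have := (hy' j).2; linarith,
          fun i => ⟨by linarith [(hy' i).2], by linarith [(hy' i).1]⟩⟩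
    · intro u hu v hv a b ha hb hab
      refine ⟨fun i j => ?_, fun i => ⟨?_, ?_⟩⟩ <;>
        simp only [Pi.add_apply, Pi.smul_apply, smul_eq_mul]
      · nlinarith [hu.1 i j, hv.1 i j]
      · nlinarith [(hu.2 i).1, (hv.2 i).1]
      · nlinarith [(hu.2 i).2, (hv.2 i).2]
  · rintro y ⟨h1, h2⟩
    set L : ℝ := Finset.univ.fold max 0 y with hL
    have hl0 : 0 ≤ L := (Finset.le_fold_max 0).2 (Or.inl le_rfl)
    have hl1 : L ≤ 1 := (Finset.fold_max_le 1).2 ⟨zero_le_one, fun i _ => (h2 i).2⟩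
    have hyL : ∀ i, y i ≤ L := fun i =>
      (Finset.le_fold_max _).2 (Or.inr ⟨i, Finset.mem_univ i, le_rfl⟩)
    have hLy : ∀ i, L - 1 ≤ y i := by
      intro i
      have : L ≤ y i + 1 := (Finset.fold_max_le _).2
        ⟨by linarith [(h2 i).1], fun j _ => by linarith [h1 j i]⟩
      linarith
    rcases eq_or_lt_of_le hl0 with h0 | h0
    · apply subset_convexHull
      right
      rw [Set.mem_neg]
      intro i
      constructor
      · have := hyL i; simp only [Pi.neg_apply]; linarith
      · have := (h2 i).1; simp only [Pi.neg_apply]; linarith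
    rcases eq_or_lt_of_le hl1 with h1' | h1'
    · apply subset_convexHull
      left
      exact fun i => ⟨by have := hLy i; linarith, (h2 i).2⟩
    · set a : Fin d → ℝ := fun i => max (y i) 0 / L with ha
      set b : Fin d → ℝ := fun i => max (-(y i)) 0 / (1 - L) with hb
      have haC : a ∈ {x : Fin d → ℝ | ∀ i, 0 ≤ x i ∧ x i ≤ 1} := by
        intro i
        constructor
        · exact div_nonneg (le_max_right _ _) h0.le
        · rw [div_le_one h0]
          exact max_le (hyL i) hl0
      have hbC : (-b) ∈ -{x : Fin d → ℝ | ∀ i, 0 ≤ x i ∧ x i ≤ 1} := by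
        rw [Set.mem_neg, neg_neg]
        intro i
        constructor
        · exact div_nonneg (le_max_right _ _) (by linarith)
        · rw [div_le_one (by linarith)]
          exact max_le (by linarith [hLy i]) (by linarith)
      have key : y = L • a + (1 - L) • (-b) := by
        funext i
        simp only [Pi.add_apply, Pi.smul_apply, Pi.neg_apply, smul_eq_mul, ha, hb]
        rw [mul_div_cancel₀ _ h0.ne', mul_neg, mul_div_cancel₀ _ (by linarith : (1:ℝ) - L ≠ 0)]
        rcases le_total (y i) 0 with h | h
        · rw [max_eq_right h, max_eq_left (by linarith)]; ring
        · rw [max_eq_left h, max_eq_right (by linarith)]; ring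
      have hmem1 : a ∈ ({x : Fin d → ℝ | ∀ i, 0 ≤ x i ∧ x i ≤ 1} ∪
          (-{x : Fin d → ℝ | ∀ i, 0 ≤ x i ∧ x i ≤ 1})) := Or.inl haC
      have hmem2 : (-b) ∈ ({x : Fin d → ℝ | ∀ i, 0 ≤ x i ∧ x i ≤ 1} ∪
          (-{x : Fin d → ℝ | ∀ i, 0 ≤ x i ∧ x i ≤ 1})) := Or.inr hbC
      have hseg := segment_subset_convexHull (𝕜 := ℝ) hmem1 hmem2
      apply hseg
      exact ⟨L, 1 - L, hl0, by linarith, by ring, key.symm⟩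

lemma memint (d t : ℕ) (ht : 0 < t) (x : Fin d → ℤ) :
    ((fun i => (x i : ℝ)) ∈ (t : ℝ) • (convexHull ℝ
      ({x : Fin d → ℝ | ∀ i, 0 ≤ x i ∧ x i ≤ 1} ∪
        (-{x : Fin d → ℝ | ∀ i, 0 ≤ x i ∧ x i ≤ 1})) : Set (Fin d → ℝ))) ↔
    ((∀ i j, x i - x j ≤ (t : ℤ)) ∧ ∀ i, -(t : ℤ) ≤ x i ∧ x i ≤ t) := by
  have ht' : (0:ℝ) < t := by positivity
  rw [Set.mem_smul_set_iff_inv_smul_mem₀ (by positivity : (t:ℝ) ≠ 0), hullQ]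
  simp only [Set.mem_setOf_eq, Pi.smul_apply, smul_eq_mul]
  have e1 : ∀ a b : ℤ, ((t:ℝ)⁻¹ * a - (t:ℝ)⁻¹ * b ≤ 1) ↔ (a - b ≤ (t:ℤ)) := by
    intro a b
    rw [← mul_sub, ← div_eq_inv_mul, div_le_one ht']
    exact_mod_cast Iff.rfl
  have e2 : ∀ a : ℤ, ((t:ℝ)⁻¹ * a ≤ 1) ↔ (a ≤ (t:ℤ)) := by
    intro a
    rw [← div_eq_inv_mul, div_le_one ht']
    exact_mod_cast Iff.rfl
  have e3 : ∀ a : ℤ, (-1 ≤ (t:ℝ)⁻¹ * a) ↔ (-(t:ℤ) ≤ a) := by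
    intro a
    rw [← div_eq_inv_mul, le_div_iff₀ ht', neg_one_mul]
    exact_mod_cast Iff.rfl
  constructor
  · rintro ⟨h1, h2⟩
    exact ⟨fun i j => (e1 _ _).1 (h1 i j),
      fun i => ⟨(e3 _).1 (h2 i).1, (e2 _).1 (h2 i).2⟩⟩
  · rintro ⟨h1, h2⟩
    exact ⟨fun i j => (e1 _ _).2 (h1 i j),
      fun i => ⟨(e3 _).2 (h2 i).1, (e2 _).2 (h2 i).2⟩⟩

def mfun {d : ℕ} (x : Fin d → ℤ) : ℤ :=
  ((Finset.univ.sup fun i => (-x i).toNat : ℕ) : ℤ)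

lemma mfun_nonneg {d : ℕ} (x : Fin d → ℤ) : 0 ≤ mfun x := Int.natCast_nonneg _

lemma mfun_le {d : ℕ} (x : Fin d → ℤ) (i : Fin d) : -x i ≤ mfun x := by
  have h1 : -x i ≤ ((-x i).toNat : ℤ) := Int.self_le_toNat _
  have h2 : ((-x i).toNat : ℕ) ≤ (Finset.univ.sup fun i => (-x i).toNat : ℕ) :=
    Finset.le_sup (f := fun i => (-x i).toNat) (Finset.mem_univ i)
  calc -x i ≤ ((-x i).toNat : ℤ) := h1
    _ ≤ mfun x := by unfold mfun; exact_mod_cast h2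
  
lemma mfun_spec {d : ℕ} (x : Fin d → ℤ) : mfun x = 0 ∨ ∃ j, mfun x = -x j := by
  rcases Nat.eq_zero_or_pos (Finset.univ.sup fun i => (-x i).toNat : ℕ) with h | h
  · left; simp [mfun, h]
  · have hne : (Finset.univ : Finset (Fin d)).Nonempty := by
      by_contra hc
      rw [Finset.not_nonempty_iff_eq_empty] at hc
      rw [hc] at h
      simp at h
    obtain ⟨j, _, hj⟩ := Finset.exists_mem_eq_sup Finset.univ hne fun i => (-x i).toNat
    rcases le_or_gt (-x j) 0 with hle | hlt
    · left
      have : (-x j).toNat = 0 := Int.toNat_of_nonpos hle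
      simp [mfun, hj, this]
    · right
      exact ⟨j, by rw [mfun, hj, Int.toNat_of_nonneg hlt.le]⟩

lemma mfun_le_of {d : ℕ} (x : Fin d → ℤ) (c : ℤ) (hc : 0 ≤ c) (h : ∀ i, -x i ≤ c) :
    mfun x ≤ c := by
  have : (Finset.univ.sup fun i => (-x i).toNat : ℕ) ≤ c.toNat :=
    Finset.sup_le fun i _ => by
      have := h i; omega
  calc mfun x ≤ (c.toNat : ℤ) := by unfold mfun; exact_mod_cast this
    _ = c := Int.toNat_of_nonneg hc

lemma count (d t : ℕ) :
    ((Fintype.piFinset fun _ : Fin d => Finset.Icc (-(t:ℤ)) t).filter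
      (fun x => ∀ i j, x i - x j ≤ (t:ℤ))).card = (t+1)^(d+1) - t^(d+1) := by
  have e1 : ((t:ℤ) + 1 - 0).toNat = t + 1 := by omega
  have e2 : ((t:ℤ) + 1 - 1).toNat = t := by omega
  classical
  set T : Finset (Fin (d+1) → ℤ) :=
    (Fintype.piFinset fun _ : Fin (d+1) => Finset.Icc (0:ℤ) t) \
      (Fintype.piFinset fun _ : Fin (d+1) => Finset.Icc (1:ℤ) t) with hT
  have hcard : ((Fintype.piFinset fun _ : Fin d => Finset.Icc (-(t:ℤ)) t).filter
      (fun x => ∀ i j, x i - x j ≤ (t:ℤ))).card = T.card := by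
    refine Finset.card_bij' (fun x _ => Fin.cons (mfun x) (fun i => x i + mfun x))
      (fun f _ => fun i => f i.succ - f 0) ?hi ?hj ?li ?ri
    case hi =>
      intro x hx
      simp only [Finset.mem_filter, Fintype.mem_piFinset, Finset.mem_Icc] at hx
      obtain ⟨hbox, hpair⟩ := hx
      rw [hT, Finset.mem_sdiff]
      constructor
      · rw [Fintype.mem_piFinset]
        intro j
        rw [Finset.mem_Icc]
        induction j using Fin.cases with
        | zero =>
          simp only [Fin.cons_zero]
          refine ⟨mfun_nonneg x, mfun_le_of x t (by positivity) fun i => ?_⟩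
          have := (hbox i).1; omega
        | succ i =>
          simp only [Fin.cons_succ]
          constructor
          · have := mfun_le x i; omega
          · rcases mfun_spec x with h | ⟨j, hj⟩
            · have := (hbox i).2; omega
            · have := hpair i j; omega
      · rw [Fintype.mem_piFinset]
        push_neg
        rcases mfun_spec x with h | ⟨j, hj⟩
        · exact ⟨0, by simp only [Fin.cons_zero, Finset.mem_Icc]; omega⟩
        · exact ⟨j.succ, by simp only [Fin.cons_succ, Finset.mem_Icc]; omega⟩
    case hj =>
      intro f hf
      rw [hT, Finset.mem_sdiff, Fintype.mem_piFinset] at hf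
      have hb : ∀ j, 0 ≤ f j ∧ f j ≤ t := fun j => Finset.mem_Icc.1 (hf.1 j)
      simp only [Finset.mem_filter, Fintype.mem_piFinset, Finset.mem_Icc]
      constructor
      · intro i
        have h1 := hb i.succ; have h2 := hb 0; omega
      · intro i j
        have h1 := hb i.succ; have h2 := hb j.succ; have h3 := hb 0; omega
    case li =>
      intro x hx
      funext i
      simp [Fin.cons_succ]
    case ri =>
      intro f hf
      rw [hT, Finset.mem_sdiff, Fintype.mem_piFinset] at hf
      have hb : ∀ j, 0 ≤ f j ∧ f j ≤ t := fun j => Finset.mem_Icc.1 (hf.1 j)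
      have hz : ∃ j, f j = 0 := by
        have := hf.2
        rw [Fintype.mem_piFinset] at this
        push_neg at this
        obtain ⟨j, hj⟩ := this
        rw [Finset.mem_Icc] at hj
        have := hb j
        exact ⟨j, by omega⟩
      have key : mfun (fun i => f i.succ - f 0) = f 0 := by
        apply le_antisymm
        · exact mfun_le_of _ _ (hb 0).1 fun i => by have := hb i.succ; omega
        · obtain ⟨j, hj⟩ := hz
          induction j using Fin.cases with
          | zero =>
            rw [hj]
            exact mfun_nonneg _
          | succ i =>
            have := mfun_le (fun i => f i.succ - f 0) i
            omega
      funext j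
      induction j using Fin.cases with
      | zero => simp only [Fin.cons_zero]; exact key
      | succ i => simp only [Fin.cons_succ, key]; ring
  rw [hcard, hT]
  have hsub : (Fintype.piFinset fun _ : Fin (d+1) => Finset.Icc (1:ℤ) t) ⊆
      (Fintype.piFinset fun _ : Fin (d+1) => Finset.Icc (0:ℤ) t) :=
    Fintype.piFinset_subset _ _ fun a => Finset.Icc_subset_Icc (by norm_num) le_rfl
  rw [Finset.card_sdiff_of_subset hsub, Fintype.card_piFinset, Fintype.card_piFinset]
  simp only [Int.card_Icc, e1, e2, Finset.prod_const, Finset.card_univ, Fintype.card_fin]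

/-- the Ehrhart counting function of
`Q = conv([0,1]^d ∪ -[0,1]^d)` equals `(t+1)^{d+1} - t^{d+1}`. -/
theorem stmt1 (d t : ℕ) (ht : 0 < t) :
    Set.ncard {x : Fin d → ℤ |
        (fun i => (x i : ℝ)) ∈ (t : ℝ) • (convexHull ℝ
          ({x : Fin d → ℝ | ∀ i, 0 ≤ x i ∧ x i ≤ 1} ∪
            (-{x : Fin d → ℝ | ∀ i, 0 ≤ x i ∧ x i ≤ 1})) : Set (Fin d → ℝ))} =
      (t + 1) ^ (d + 1) - t ^ (d + 1) := by
  classical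
  have hset : {x : Fin d → ℤ |
        (fun i => (x i : ℝ)) ∈ (t : ℝ) • (convexHull ℝ
          ({x : Fin d → ℝ | ∀ i, 0 ≤ x i ∧ x i ≤ 1} ∪
            (-{x : Fin d → ℝ | ∀ i, 0 ≤ x i ∧ x i ≤ 1})) : Set (Fin d → ℝ))} =
      ↑((Fintype.piFinset fun _ : Fin d => Finset.Icc (-(t:ℤ)) t).filter
        (fun x => ∀ i j, x i - x j ≤ (t:ℤ))) := by
    ext x
    rw [Set.mem_setOf_eq, memint d t ht x, Finset.mem_coe, Finset.mem_filter,
      Fintype.mem_piFinset]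
    simp only [Finset.mem_Icc]
    tauto
  rw [hset, Set.ncard_coe_finset, count]
end

section
/- Let P be a finite poset on [d]. The polytope Q^(sym)_{A_P} is normal (has the integer decomposition property): for each integer N > 0 and each lattice point a ∈ N·Q^(sym)_{A_P} ∩ Z^d, there exist lattice points a_1, ..., a_N ∈ Q^(sym)_{A_P} ∩ Z^d with a = a_1 + ... + a_N. -/
open Pointwise

namespace Stmt10Aux

variable {α : Type*}

/-- Alternating sum `g c₁ - g c₂ + g c₃ - ⋯` along a list. -/
def altS {R : Type*} [Ring R] (g : α → R) : List α → R
  | [] => 0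
  | c :: l => g c - altS g l

/-- Signed indicator vector of a list: `+1` at odd positions, `-1` at even ones. -/
def sgnl {R : Type*} [Ring R] [DecidableEq α] : List α → α → R
  | [] => fun _ => 0
  | c :: l => fun x => (if x = c then 1 else 0) - sgnl l x

lemma sum_sgnl_mul {R : Type*} [CommRing R] [Fintype α] [DecidableEq α]
    (g : α → R) (l : List α) :
    ∑ x, sgnl l x * g x = altS g l := by
  induction l with
  | nil => simp [sgnl, altS]
  | cons c l ih =>
      simp only [sgnl, altS, sub_mul, Finset.sum_sub_distrib, ih, ite_mul, one_mul, zero_mul]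
      rw [Finset.sum_ite_eq' Finset.univ c g]
      simp

lemma altS_cast [Fintype α] (g : α → ℤ) (l : List α) :
    ((altS g l : ℤ) : ℝ) = altS (fun i => (g i : ℝ)) l := by
  induction l with
  | nil => simp [altS]
  | cons c l ih => simp [altS, ih]

lemma altS_neg {R : Type*} [Ring R] (g : α → R) (l : List α) :
    altS (-g) l = - altS g l := by
  induction l with
  | nil => simp [altS]
  | cons c l ih => simp [altS, ih]; abel

lemma altS_of_zero {R : Type*} [Ring R] (g : α → R) (l : List α)
    (h : ∀ x ∈ l, g x = 0) : altS g l = 0 := by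
  induction l with
  | nil => simp [altS]
  | cons c l ih =>
      simp [altS, h c (by simp), ih fun x hx => h x (by simp [hx])]

lemma altS_indicator_mem [PartialOrder α] (I : Set α) (hI : IsLowerSet I)
    (l : List α) (hl : l.Pairwise (· ≤ ·)) :
    0 ≤ altS (Set.indicator I (1 : α → ℝ)) l ∧ altS (Set.indicator I (1 : α → ℝ)) l ≤ 1 := by
  induction l with
  | nil => simp [altS]
  | cons c l ih =>
      obtain ⟨hcl, hl'⟩ := List.pairwise_cons.mp hl
      by_cases hc : c ∈ I
      · have h1 : Set.indicator I (1 : α → ℝ) c = 1 := Set.indicator_of_mem hc 1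
        have := ih hl'
        constructor <;> simp [altS, h1] <;> linarith [this.1, this.2]
      · have h1 : Set.indicator I (1 : α → ℝ) c = 0 := Set.indicator_of_notMem hc 1
        have h0 : altS (Set.indicator I (1 : α → ℝ)) l = 0 := by
          apply altS_of_zero
          intro x hx
          have hcx : c ≤ x := hcl x hx
          have : x ∉ I := fun hxI => hc (hI hcx hxI)
          exact Set.indicator_of_notMem this 1
        simp [altS, h1, h0]

lemma sum_if_lt (n : ℕ) (c : ℤ) (h0 : 0 ≤ c) (hn : c ≤ n) :
    ∑ j ∈ Finset.range n, (if (j : ℤ) < c then (1 : ℤ) else 0) = c := by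
  induction n with
  | zero => simp at hn ⊢; omega
  | succ n ih =>
      rw [Finset.sum_range_succ]
      by_cases h : c ≤ n
      · rw [ih h]
        have : ¬ ((n : ℤ) < c) := by omega
        simp [this]
      · have hc : c = n + 1 := by push_cast at hn ⊢; omega
        have : ∀ j ∈ Finset.range n, (if (j : ℤ) < c then (1:ℤ) else 0) = 1 := by
          intro j hj
          simp only [Finset.mem_range] at hj
          have : (j : ℤ) < c := by omega
          simp [this]
        rw [Finset.sum_congr rfl this]
        have : (n : ℤ) < c := by omega
        simp [this, hc]

end Stmt10Aux

open Stmt10Aux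

/-- the polytope `Q^(sym)_{A_P}` is normal (integer decomposition
property): every lattice point of the `N`-th dilate is a sum of `N` lattice points of
the polytope. -/
theorem stmt10 (α : Type*) [Fintype α] [PartialOrder α] (N : ℕ) (hN : 0 < N)
    (a : α → ℤ)
    (ha : (fun i => (a i : ℝ)) ∈ (N : ℝ) • (convexHull ℝ
      {v : α → ℝ | ∃ I : Set α, IsLowerSet I ∧ I.Nonempty ∧
        (v = Set.indicator I 1 ∨ v = -Set.indicator I 1)} : Set (α → ℝ))) :
    ∃ f : Fin N → (α → ℤ),
      (∀ j, (fun i => ((f j i : ℝ))) ∈ convexHull ℝ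
        {v : α → ℝ | ∃ I : Set α, IsLowerSet I ∧ I.Nonempty ∧
          (v = Set.indicator I 1 ∨ v = -Set.indicator I 1)}) ∧
      a = ∑ j, f j := by
  classical
  set S : Set (α → ℝ) := {v : α → ℝ | ∃ I : Set α, IsLowerSet I ∧ I.Nonempty ∧
      (v = Set.indicator I 1 ∨ v = -Set.indicator I 1)} with hSdef
  rcases isEmpty_or_nonempty α with hα | hα
  · exfalso
    have hSe : S = ∅ := by
      ext w
      simp only [hSdef, Set.mem_setOf_eq, Set.mem_empty_iff_false, iff_false]
      rintro ⟨I, -, ⟨x, -⟩, -⟩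
      exact hα.elim x
    rw [hSe, convexHull_empty, Set.smul_set_empty] at ha
    exact ha
  -- Step 1: linear functional bound coming from membership in the dilate
  have hL1 : ∀ w : α → ℝ, (∀ s ∈ S, ∑ i, w i * s i ≤ 1) →
      ∑ i, w i * (a i : ℝ) ≤ (N : ℝ) := by
    intro w hw
    obtain ⟨x, hx, hxa⟩ := Set.mem_smul_set.mp ha
    have hlin : IsLinearMap ℝ (fun y : α → ℝ => ∑ i, w i * y i) := by
      constructor
      · intro y z; simp [mul_add, Finset.sum_add_distrib]
      · intro c y
        simp only [Pi.smul_apply, smul_eq_mul, Finset.mul_sum]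
        exact Finset.sum_congr rfl fun i _ => by ring
    have hxH : ∑ i, w i * x i ≤ 1 :=
      convexHull_min hw (convex_halfSpace_le hlin 1) hx
    have hxa' : ∀ i, (a i : ℝ) = (N : ℝ) * x i := by
      intro i
      have := congrFun hxa i
      simpa using this.symm
    calc ∑ i, w i * (a i : ℝ) = ∑ i, w i * ((N : ℝ) * x i) := by
          exact Finset.sum_congr rfl fun i _ => by rw [hxa']
      _ = (N : ℝ) * ∑ i, w i * x i := by
          rw [Finset.mul_sum]; exact Finset.sum_congr rfl fun i _ => by ring
      _ ≤ (N : ℝ) * 1 := by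
          apply mul_le_mul_of_nonneg_left hxH (by positivity)
      _ = (N : ℝ) := mul_one _
  -- Step 2: bound on differences of alternating chain sums
  have hL3 : ∀ l₁ l₂ : List α, l₁.Pairwise (· ≤ ·) → l₂.Pairwise (· ≤ ·) →
      altS a l₁ - altS a l₂ ≤ (N : ℤ) := by
    intro l₁ l₂ h1 h2
    have key := hL1 (fun i => sgnl l₁ i - sgnl l₂ i) ?_
    · have e : ∑ i, (sgnl (R := ℝ) l₁ i - sgnl l₂ i) * (a i : ℝ)
          = altS (fun i => (a i : ℝ)) l₁ - altS (fun i => (a i : ℝ)) l₂ := by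
        simp [sub_mul, Finset.sum_sub_distrib, sum_sgnl_mul]
      rw [e, ← altS_cast, ← altS_cast] at key
      exact_mod_cast key
    · rintro s ⟨I, hIl, hIne, (rfl | rfl)⟩
      · have hA := altS_indicator_mem I hIl l₁ h1
        have hB := altS_indicator_mem I hIl l₂ h2
        have e : ∑ i, (sgnl (R := ℝ) l₁ i - sgnl l₂ i) * (Set.indicator I 1 i)
            = altS (Set.indicator I (1 : α → ℝ)) l₁ - altS (Set.indicator I (1 : α → ℝ)) l₂ := by
          simp [sub_mul, Finset.sum_sub_distrib, sum_sgnl_mul]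
        rw [e]; linarith [hA.1, hA.2, hB.1, hB.2]
      · have hA := altS_indicator_mem I hIl l₁ h1
        have hB := altS_indicator_mem I hIl l₂ h2
        have e : ∑ i, (sgnl (R := ℝ) l₁ i - sgnl l₂ i) * ((-Set.indicator I 1) i)
            = -altS (Set.indicator I (1 : α → ℝ)) l₁ + altS (Set.indicator I (1 : α → ℝ)) l₂ := by
          simp only [← altS_neg]
          simp [sub_mul, Finset.sum_sub_distrib, sum_sgnl_mul, altS_neg]
          ring
        rw [e]; linarith [hA.1, hA.2, hB.1, hB.2]
  -- Step 3: the canonical antitone decomposition a = u - v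
  set U : α → Set ℤ := fun i =>
    {z | ∃ l : List α, l.Pairwise (· ≤ ·) ∧ (∀ x ∈ l, i ≤ x) ∧ altS a l = z} with hUdef
  set V : α → Set ℤ := fun i =>
    {z | ∃ l : List α, l.Pairwise (· ≤ ·) ∧ (∀ x ∈ l, i ≤ x) ∧ -altS a l = z} with hVdef
  have hU0 : ∀ i, (0 : ℤ) ∈ U i := fun i => ⟨[], by simp, by simp, by simp [altS]⟩
  have hV0 : ∀ i, (0 : ℤ) ∈ V i := fun i => ⟨[], by simp, by simp, by simp [altS]⟩
  have hUbdd : ∀ i, BddAbove (U i) := by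
    intro i
    refine ⟨N, ?_⟩
    rintro z ⟨l, hl, -, rfl⟩
    have := hL3 l [] hl (by simp)
    simpa [altS] using this
  have hVbdd : ∀ i, BddAbove (V i) := by
    intro i
    refine ⟨N, ?_⟩
    rintro z ⟨l, hl, -, rfl⟩
    have := hL3 [] l (by simp) hl
    simp only [altS] at this
    omega
  set u : α → ℤ := fun i => sSup (U i) with hudef
  set v : α → ℤ := fun i => sSup (V i) with hvdef
  have hu0 : ∀ i, 0 ≤ u i := fun i => le_csSup (hUbdd i) (hU0 i)
  have hv0 : ∀ i, 0 ≤ v i := fun i => le_csSup (hVbdd i) (hV0 i)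
  have huv_le : ∀ p q, u p + v q ≤ (N : ℤ) := by
    intro p q
    have h1 : u p ≤ (N : ℤ) - v q := by
      apply csSup_le ⟨0, hU0 p⟩
      rintro z ⟨l₁, hl₁, -, rfl⟩
      have h2 : v q ≤ (N : ℤ) - altS a l₁ := by
        apply csSup_le ⟨0, hV0 q⟩
        rintro z' ⟨l₂, hl₂, -, rfl⟩
        have := hL3 l₁ l₂ hl₁ hl₂
        omega
      omega
    omega
  have hanti_u : ∀ ⦃i i' : α⦄, i ≤ i' → u i' ≤ u i := by
    intro i i' hii'
    apply csSup_le ⟨0, hU0 i'⟩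
    rintro z ⟨l, hl, hli, rfl⟩
    exact le_csSup (hUbdd i) ⟨l, hl, fun x hx => le_trans hii' (hli x hx), rfl⟩
  have hanti_v : ∀ ⦃i i' : α⦄, i ≤ i' → v i' ≤ v i := by
    intro i i' hii'
    apply csSup_le ⟨0, hV0 i'⟩
    rintro z ⟨l, hl, hli, rfl⟩
    exact le_csSup (hVbdd i) ⟨l, hl, fun x hx => le_trans hii' (hli x hx), rfl⟩
  have key1 : ∀ i, v i ≤ u i - a i := by
    intro i
    apply csSup_le ⟨0, hV0 i⟩
    rintro z ⟨l, hl, hli, rfl⟩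
    have hmem : altS a (i :: l) ∈ U i := by
      refine ⟨i :: l, List.pairwise_cons.mpr ⟨hli, hl⟩, ?_, rfl⟩
      intro x hx
      rcases List.mem_cons.mp hx with h | h
      · exact h ▸ le_refl i
      · exact hli x h
    have h' : altS a (i :: l) ≤ u i := le_csSup (hUbdd i) hmem
    simp only [altS] at h'
    omega
  have key2 : ∀ i, u i ≤ a i + v i := by
    intro i
    apply csSup_le ⟨0, hU0 i⟩
    rintro z ⟨l, hl, hli, rfl⟩
    have hmem : -altS a (i :: l) ∈ V i := by
      refine ⟨i :: l, List.pairwise_cons.mpr ⟨hli, hl⟩, ?_, rfl⟩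
      intro x hx
      rcases List.mem_cons.mp hx with h | h
      · exact h ▸ le_refl i
      · exact hli x h
    have h' : -altS a (i :: l) ≤ v i := le_csSup (hVbdd i) hmem
    simp only [altS] at h'
    omega
  have huva : ∀ i, u i - v i = a i := by
    intro i
    have := key1 i; have := key2 i; omega
  -- Step 4: build the decomposition
  refine ⟨fun j => fun i => (if ((j : ℕ) : ℤ) < u i then 1 else 0)
      - (if ((N - 1 - (j : ℕ) : ℕ) : ℤ) < v i then 1 else 0), ?_, ?_⟩
  · intro j
    by_cases hA : ∃ i, ((j : ℕ) : ℤ) < u i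
    · obtain ⟨i₁, hi₁⟩ := hA
      have hB : ∀ i, ¬ (((N - 1 - (j : ℕ) : ℕ) : ℤ) < v i) := by
        intro i hi
        have h5 := huv_le i₁ i
        have hj := j.isLt
        omega
      have heq : (fun i => (((if ((j : ℕ) : ℤ) < u i then (1:ℤ) else 0)
          - (if ((N - 1 - (j : ℕ) : ℕ) : ℤ) < v i then 1 else 0) : ℤ) : ℝ))
          = Set.indicator {i | ((j : ℕ) : ℤ) < u i} (1 : α → ℝ) := by
        funext i
        simp only [hB i, if_false, sub_zero]
        by_cases h : ((j : ℕ) : ℤ) < u i <;>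
          simp [Set.indicator_apply, Set.mem_setOf_eq, h]
      rw [heq]
      apply subset_convexHull
      exact ⟨{i | ((j : ℕ) : ℤ) < u i},
        fun b c hcb hb => lt_of_lt_of_le hb (hanti_u hcb), ⟨i₁, hi₁⟩, Or.inl rfl⟩
    · push_neg at hA
      by_cases hB : ∃ i, ((N - 1 - (j : ℕ) : ℕ) : ℤ) < v i
      · obtain ⟨i₂, hi₂⟩ := hB
        have heq : (fun i => (((if ((j : ℕ) : ℤ) < u i then (1:ℤ) else 0)
            - (if ((N - 1 - (j : ℕ) : ℕ) : ℤ) < v i then 1 else 0) : ℤ) : ℝ))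
            = -Set.indicator {i | ((N - 1 - (j : ℕ) : ℕ) : ℤ) < v i} (1 : α → ℝ) := by
          funext i
          have h' : ¬ (((j : ℕ) : ℤ) < u i) := not_lt.mpr (hA i)
          simp only [h', if_false, zero_sub, Pi.neg_apply]
          by_cases h : ((N - 1 - (j : ℕ) : ℕ) : ℤ) < v i <;>
            simp [Set.indicator_apply, Set.mem_setOf_eq, h]
        rw [heq]
        apply subset_convexHull
        exact ⟨{i | ((N - 1 - (j : ℕ) : ℕ) : ℤ) < v i},
          fun b c hcb hb => lt_of_lt_of_le hb (hanti_v hcb), ⟨i₂, hi₂⟩, Or.inr rfl⟩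
      · push_neg at hB
        have heq : (fun i => (((if ((j : ℕ) : ℤ) < u i then (1:ℤ) else 0)
            - (if ((N - 1 - (j : ℕ) : ℕ) : ℤ) < v i then 1 else 0) : ℤ) : ℝ))
            = (0 : α → ℝ) := by
          funext i
          have h1 : ¬ (((j : ℕ) : ℤ) < u i) := not_lt.mpr (hA i)
          have h2 : ¬ (((N - 1 - (j : ℕ) : ℕ) : ℤ) < v i) := not_lt.mpr (hB i)
          simp [h1, h2]
        rw [heq]
        have h1 : Set.indicator Set.univ (1 : α → ℝ) ∈ S :=
          ⟨Set.univ, isLowerSet_univ, Set.univ_nonempty, Or.inl rfl⟩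
        have h2 : -Set.indicator Set.univ (1 : α → ℝ) ∈ S :=
          ⟨Set.univ, isLowerSet_univ, Set.univ_nonempty, Or.inr rfl⟩
        have hmem := (convex_convexHull ℝ S) (subset_convexHull ℝ S h1)
          (subset_convexHull ℝ S h2) (by norm_num : (0:ℝ) ≤ 1/2)
          (by norm_num : (0:ℝ) ≤ 1/2) (by norm_num)
        have : (1/2 : ℝ) • Set.indicator Set.univ (1 : α → ℝ)
            + (1/2 : ℝ) • (-Set.indicator Set.univ (1 : α → ℝ)) = 0 := by
          rw [smul_neg, add_neg_cancel]
        rwa [this] at hmem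
  · funext i
    have huN : u i ≤ (N : ℤ) := by have := huv_le i i; have := hv0 i; omega
    have hvN : v i ≤ (N : ℤ) := by have := huv_le i i; have := hu0 i; omega
    rw [Finset.sum_apply]
    rw [Fin.sum_univ_eq_sum_range (fun j => (if ((j : ℕ) : ℤ) < u i then (1:ℤ) else 0)
      - (if ((N - 1 - (j : ℕ) : ℕ) : ℤ) < v i then 1 else 0))]
    rw [Finset.sum_sub_distrib]
    rw [Finset.sum_range_reflect (fun m => if ((m : ℕ) : ℤ) < v i then (1:ℤ) else 0) N]
    rw [Stmt10Aux.sum_if_lt N (u i) (hu0 i) huN, Stmt10Aux.sum_if_lt N (v i) (hv0 i) hvN]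
    have := huva i
    omega
end

section
/- Let P be a finite poset in which some three elements a, b, c are pairwise incomparable. Then the matrix A_P (columns the indicator vectors of nonempty poset ideals of P) is not unimodular, i.e., not all nonzero maximal minors of A_P are ±1. -/
open Matrix Finset
set_option linter.unusedSectionVars false
set_option linter.unusedVariables false

namespace Stmt12Helper

variable {α : Type*} [Fintype α] [DecidableEq α] [PartialOrder α]

/-- The "zeta matrix" of a poset: columns are indicator vectors of principal ideals. -/
noncomputable def Zeta (α : Type*) [PartialOrder α] : Matrix α α ℤ :=
  Matrix.of fun x y => Set.indicator {z | z ≤ y} (1 : α → ℤ) x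

lemma Zeta_of_le {x y : α} (h : x ≤ y) : Zeta α x y = 1 := by
  simp [Zeta, Set.indicator_of_mem (show x ∈ {z | z ≤ y} from h)]

lemma Zeta_of_not_le {x y : α} (h : ¬ x ≤ y) : Zeta α x y = 0 := by
  simp [Zeta, Set.indicator_of_notMem (show x ∉ {z | z ≤ y} from h)]

lemma exists_monotone_equiv (α : Type*) [Fintype α] [PartialOrder α] :
    ∃ σ : α ≃ Fin (Fintype.card α), ∀ x y : α, x ≤ y → σ x ≤ σ y := by
  letI : Fintype (LinearExtension α) := ‹Fintype α›
  let e := (monoEquivOfFin (LinearExtension α)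
    (rfl : Fintype.card (LinearExtension α) = Fintype.card α)).symm
  refine ⟨e.toEquiv, fun x y h => ?_⟩
  exact e.monotone (toLinearExtension.monotone h)

lemma pow_support_nat {n : ℕ} (W : Matrix (Fin n) (Fin n) ℤ)
    (hW : ∀ i j : Fin n, ¬ ((i : ℕ) < (j : ℕ)) → W i j = 0) :
    ∀ (k : ℕ) (i j : Fin n), (W ^ k) i j ≠ 0 → (i : ℕ) + k ≤ (j : ℕ) := by
  intro k
  induction k with
  | zero =>
    intro i j h
    rw [pow_zero] at h
    rcases eq_or_ne i j with rfl | hne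
    · omega
    · exact absurd (Matrix.one_apply_ne hne) h
  | succ k ih =>
    intro i j h
    rw [pow_succ, Matrix.mul_apply] at h
    obtain ⟨z, _, hz⟩ := Finset.exists_ne_zero_of_sum_ne_zero h
    have h1 : (W ^ k) i z ≠ 0 := left_ne_zero_of_mul hz
    have h2 : W z j ≠ 0 := right_ne_zero_of_mul hz
    have hzj : (z : ℕ) < (j : ℕ) := by by_contra hc; exact h2 (hW z j hc)
    have := ih i z h1
    omega

lemma pow_card_eq_zero {n : ℕ} (W : Matrix (Fin n) (Fin n) ℤ)
    (hW : ∀ i j : Fin n, ¬ ((i : ℕ) < (j : ℕ)) → W i j = 0) : W ^ n = 0 := by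
  ext i j
  simp only [Matrix.zero_apply]
  by_contra h
  have h1 := pow_support_nat W hW n i j h
  have h2 := j.isLt
  omega

lemma pow_support_le {n : ℕ} (σ : α ≃ Fin n) (W : Matrix (Fin n) (Fin n) ℤ)
    (hW : ∀ x y : α, ¬ x ≤ y → W (σ x) (σ y) = 0) :
    ∀ (k : ℕ) (x y : α), ¬ x ≤ y → (W ^ k) (σ x) (σ y) = 0 := by
  intro k
  induction k with
  | zero =>
    intro x y h
    rw [pow_zero]
    exact Matrix.one_apply_ne fun hc => h (le_of_eq (σ.injective hc))
  | succ k ih =>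
    intro x y h
    rw [pow_succ, Matrix.mul_apply]
    refine Finset.sum_eq_zero fun z _ => ?_
    have hz : z = σ (σ.symm z) := (σ.apply_symm_apply z).symm
    rw [hz]
    by_cases hxw : x ≤ σ.symm z
    · have hwy : ¬ σ.symm z ≤ y := fun hc => h (hxw.trans hc)
      rw [hW _ _ hwy, mul_zero]
    · rw [ih x _ hxw, zero_mul]

variable {n : ℕ}

/-- The strictly-triangular part of the reindexed zeta matrix. -/
noncomputable def Usub (σ : α ≃ Fin n) : Matrix (Fin n) (Fin n) ℤ :=
  (Zeta α).submatrix σ.symm σ.symm - 1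

/-- The inverse of the zeta matrix (the Möbius matrix), via a geometric series. -/
noncomputable def Zinv (σ : α ≃ Fin n) : Matrix α α ℤ :=
  (∑ k ∈ Finset.range n, (-(Usub σ)) ^ k).submatrix σ σ

lemma Usub_support_nat (σ : α ≃ Fin n) (hσ : ∀ x y : α, x ≤ y → σ x ≤ σ y) :
    ∀ i j : Fin n, ¬ ((i : ℕ) < (j : ℕ)) → Usub σ i j = 0 := by
  intro i j hij
  rcases eq_or_ne i j with rfl | hne
  · simp [Usub, Matrix.sub_apply, Zeta_of_le (le_refl (σ.symm i))]
  · have hji : ¬ σ.symm i ≤ σ.symm j := by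
      intro hc
      have h2 := hσ _ _ hc
      simp only [Equiv.apply_symm_apply] at h2
      have h3 : (i : ℕ) ≤ (j : ℕ) := h2
      have h4 : (i : ℕ) ≠ (j : ℕ) := fun hv => hne (Fin.ext hv)
      omega
    simp [Usub, Matrix.sub_apply, Zeta_of_not_le hji, Matrix.one_apply_ne hne]

lemma Usub_support_le (σ : α ≃ Fin n) {x y : α} (h : ¬ x ≤ y) :
    Usub σ (σ x) (σ y) = 0 := by
  have hne : x ≠ y := fun hc => h hc.le
  simp [Usub, Matrix.sub_apply, Matrix.submatrix_apply, Equiv.symm_apply_apply,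
    Zeta_of_not_le h, Matrix.one_apply_ne fun hc => hne (σ.injective hc)]

lemma negU_support_le (σ : α ≃ Fin n) {x y : α} (h : ¬ x ≤ y) :
    (-(Usub σ)) (σ x) (σ y) = 0 := by
  simp [Matrix.neg_apply, Usub_support_le σ h]

lemma geom_mul (σ : α ≃ Fin n) (hσ : ∀ x y : α, x ≤ y → σ x ≤ σ y) :
    (∑ k ∈ Finset.range n, (-(Usub σ)) ^ k) * ((Zeta α).submatrix σ.symm σ.symm) = 1 := by
  have hnil : (-(Usub σ)) ^ n = 0 := by
    have hU : (Usub σ) ^ n = 0 := pow_card_eq_zero _ (fun i j hij => by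
      by_cases hlt : (i : ℕ) < (j : ℕ)
      · exact absurd hlt hij
      · exact Usub_support_nat σ hσ i j hij)
    rw [neg_pow, hU, mul_zero]
  have key := geom_sum_mul (-(Usub σ)) n
  rw [hnil, zero_sub] at key
  have hZs : (-(Usub σ)) - 1 = -((Zeta α).submatrix σ.symm σ.symm) := by
    simp only [Usub]; abel
  rw [hZs, mul_neg] at key
  exact neg_injective key

lemma mul_geom (σ : α ≃ Fin n) (hσ : ∀ x y : α, x ≤ y → σ x ≤ σ y) :
    ((Zeta α).submatrix σ.symm σ.symm) * (∑ k ∈ Finset.range n, (-(Usub σ)) ^ k) = 1 := by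
  have hnil : (-(Usub σ)) ^ n = 0 := by
    have hU : (Usub σ) ^ n = 0 := pow_card_eq_zero _ (fun i j hij => by
      by_cases hlt : (i : ℕ) < (j : ℕ)
      · exact absurd hlt hij
      · exact Usub_support_nat σ hσ i j hij)
    rw [neg_pow, hU, mul_zero]
  have key := mul_geom_sum (-(Usub σ)) n
  rw [hnil, zero_sub] at key
  have hZs : (-(Usub σ)) - 1 = -((Zeta α).submatrix σ.symm σ.symm) := by
    simp only [Usub]; abel
  rw [hZs, neg_mul] at key
  exact neg_injective key

lemma zeta_eq_submatrix (σ : α ≃ Fin n) :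
    Zeta α = ((Zeta α).submatrix σ.symm σ.symm).submatrix σ σ := by
  rw [Matrix.submatrix_submatrix, Equiv.symm_comp_self, Matrix.submatrix_id_id]

lemma zinv_mul_zeta (σ : α ≃ Fin n) (hσ : ∀ x y : α, x ≤ y → σ x ≤ σ y) :
    Zinv σ * Zeta α = 1 := by
  conv_lhs => rw [Zinv, zeta_eq_submatrix σ]
  rw [Matrix.submatrix_mul_equiv, geom_mul σ hσ, Matrix.submatrix_one_equiv]

lemma zeta_mul_zinv (σ : α ≃ Fin n) (hσ : ∀ x y : α, x ≤ y → σ x ≤ σ y) :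
    Zeta α * Zinv σ = 1 := by
  conv_lhs => rw [Zinv, zeta_eq_submatrix σ]
  rw [Matrix.submatrix_mul_equiv, mul_geom σ hσ, Matrix.submatrix_one_equiv]

lemma zinv_support (σ : α ≃ Fin n) {x y : α} (h : ¬ x ≤ y) : Zinv σ x y = 0 := by
  have hall : ∀ k : ℕ, ((-(Usub σ)) ^ k) (σ x) (σ y) = 0 := fun k =>
    pow_support_le σ _ (fun u v huv => negU_support_le σ huv) k x y h
  simp only [Zinv, Matrix.submatrix_apply, Matrix.sum_apply]
  exact Finset.sum_eq_zero fun k _ => hall k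

lemma det_zeta (σ : α ≃ Fin n) (hσ : ∀ x y : α, x ≤ y → σ x ≤ σ y) :
    (Zeta α).det = 1 := by
  have h1 : ((Zeta α).submatrix σ.symm σ.symm).det = (Zeta α).det :=
    Matrix.det_submatrix_equiv_self σ.symm _
  rw [← h1, Matrix.det_of_upperTriangular (M := (Zeta α).submatrix σ.symm σ.symm) ?_]
  · exact Finset.prod_eq_one fun i _ => by
      simp [Matrix.submatrix_apply, Zeta_of_le (le_refl (σ.symm i))]
  · intro i j hji
    have hji' : ¬ σ.symm i ≤ σ.symm j := by
      intro hc
      have h2 := hσ _ _ hc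
      simp only [Equiv.apply_symm_apply] at h2
      exact absurd hji (not_lt.mpr h2)
    simp [Matrix.submatrix_apply, Zeta_of_not_le hji']

lemma sum_indicator_eq_one (σ : α ≃ Fin n) (hσ : ∀ x y : α, x ≤ y → σ x ≤ σ y)
    (x : α) (S : Set α) (h1 : ∀ z, z ≤ x → z ∈ S) (h2 : ∀ z ∈ S, x ≤ z → z ≤ x) :
    ∑ z : α, Zinv σ x z * S.indicator (1 : α → ℤ) z = 1 := by
  have hterm : ∀ z : α, Zinv σ x z * S.indicator (1 : α → ℤ) z = Zinv σ x z * Zeta α z x := by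
    intro z
    by_cases hz : z ≤ x
    · rw [Zeta_of_le hz, Set.indicator_of_mem (h1 z hz)]; simp
    · rw [Zeta_of_not_le hz, mul_zero]
      by_cases hzS : z ∈ S
      · rw [zinv_support σ (fun hc => hz (h2 z hzS hc)), zero_mul]
      · rw [Set.indicator_of_notMem hzS, mul_zero]
  calc ∑ z : α, Zinv σ x z * S.indicator (1 : α → ℤ) z
      = ∑ z : α, Zinv σ x z * Zeta α z x := Finset.sum_congr rfl fun z _ => hterm z
    _ = (Zinv σ * Zeta α) x x := (Matrix.mul_apply).symm
    _ = 1 := by rw [zinv_mul_zeta σ hσ, Matrix.one_apply_eq]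

lemma sum_indicator_eq_zero (σ : α ≃ Fin n)
    (x : α) (S : Set α) (h : ∀ z ∈ S, ¬ x ≤ z) :
    ∑ z : α, Zinv σ x z * S.indicator (1 : α → ℤ) z = 0 :=
  Finset.sum_eq_zero fun z _ => by
    by_cases hzS : z ∈ S
    · rw [zinv_support σ (h z hzS), zero_mul]
    · rw [Set.indicator_of_notMem hzS, mul_zero]

/-- The family of columns used in the main theorem. -/
noncomputable def cols (a b c : α) (Sa Sb Sc : {I : Set α // IsLowerSet I ∧ I.Nonempty}) :
    α → {I : Set α // IsLowerSet I ∧ I.Nonempty} := fun y =>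
  if y = a then Sa else if y = b then Sb else if y = c then Sc
  else ⟨{z | z ≤ y}, fun v w hwv hv => hwv.trans hv, y, le_rfl⟩

end Stmt12Helper

open Stmt12Helper

/-- if a finite poset contains three pairwise incomparable elements, then
the matrix `A_P` of indicator vectors of nonempty poset ideals is not unimodular: some
maximal minor is neither 0 nor ±1. -/
theorem stmt12 (α : Type*) [Fintype α] [DecidableEq α] [PartialOrder α] (a b c : α)
    (hab : ¬ a ≤ b ∧ ¬ b ≤ a) (hac : ¬ a ≤ c ∧ ¬ c ≤ a) (hbc : ¬ b ≤ c ∧ ¬ c ≤ b) :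
    ∃ cols : α → {I : Set α // IsLowerSet I ∧ I.Nonempty},
      (Matrix.of fun x y => Set.indicator (cols y).1 (1 : α → ℤ) x).det ≠ 0 ∧
      (Matrix.of fun x y => Set.indicator (cols y).1 (1 : α → ℤ) x).det ≠ 1 ∧
      (Matrix.of fun x y => Set.indicator (cols y).1 (1 : α → ℤ) x).det ≠ -1 := by
  classical
  obtain ⟨hab1, hab2⟩ := hab
  obtain ⟨hac1, hac2⟩ := hac
  obtain ⟨hbc1, hbc2⟩ := hbc
  have hne_ab : a ≠ b := fun h => hab1 h.le
  have hne_ba : b ≠ a := fun h => hab2 h.le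
  have hne_ac : a ≠ c := fun h => hac1 h.le
  have hne_ca : c ≠ a := fun h => hac2 h.le
  have hne_bc : b ≠ c := fun h => hbc1 h.le
  have hne_cb : c ≠ b := fun h => hbc2 h.le
  -- the three special lower sets
  set Ia : Set α := {z | (z ≤ a ∨ z ≤ b ∨ z ≤ c) ∧ z ≠ c} with hIa_def
  set Ib : Set α := {z | (z ≤ a ∨ z ≤ b ∨ z ≤ c) ∧ z ≠ a} with hIb_def
  set Ic : Set α := {z | (z ≤ a ∨ z ≤ b ∨ z ≤ c) ∧ z ≠ b} with hIc_def
  have hIa_low : IsLowerSet Ia := by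
    intro v w hwv hv
    obtain ⟨hv1, hv2⟩ := hv
    refine ⟨?_, ?_⟩
    · rcases hv1 with h | h | h
      exacts [Or.inl (hwv.trans h), Or.inr (Or.inl (hwv.trans h)), Or.inr (Or.inr (hwv.trans h))]
    · rintro rfl
      rcases hv1 with h | h | h
      · exact hac2 (hwv.trans h)
      · exact hbc2 (hwv.trans h)
      · exact hv2 (le_antisymm h hwv)
  have hIb_low : IsLowerSet Ib := by
    intro v w hwv hv
    obtain ⟨hv1, hv2⟩ := hv
    refine ⟨?_, ?_⟩
    · rcases hv1 with h | h | h
      exacts [Or.inl (hwv.trans h), Or.inr (Or.inl (hwv.trans h)), Or.inr (Or.inr (hwv.trans h))]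
    · rintro rfl
      rcases hv1 with h | h | h
      · exact hv2 (le_antisymm h hwv)
      · exact hab1 (hwv.trans h)
      · exact hac1 (hwv.trans h)
  have hIc_low : IsLowerSet Ic := by
    intro v w hwv hv
    obtain ⟨hv1, hv2⟩ := hv
    refine ⟨?_, ?_⟩
    · rcases hv1 with h | h | h
      exacts [Or.inl (hwv.trans h), Or.inr (Or.inl (hwv.trans h)), Or.inr (Or.inr (hwv.trans h))]
    · rintro rfl
      rcases hv1 with h | h | h
      · exact hab2 (hwv.trans h)
      · exact hv2 (le_antisymm h hwv)
      · exact hbc1 (hwv.trans h)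
  have haIa : a ∈ Ia := ⟨Or.inl le_rfl, hne_ac⟩
  have hbIb : b ∈ Ib := ⟨Or.inr (Or.inl le_rfl), hne_ba⟩
  have hcIc : c ∈ Ic := ⟨Or.inr (Or.inr le_rfl), hne_cb⟩
  set Sa : {I : Set α // IsLowerSet I ∧ I.Nonempty} := ⟨Ia, hIa_low, a, haIa⟩ with hSa
  set Sb : {I : Set α // IsLowerSet I ∧ I.Nonempty} := ⟨Ib, hIb_low, b, hbIb⟩ with hSb
  set Sc : {I : Set α // IsLowerSet I ∧ I.Nonempty} := ⟨Ic, hIc_low, c, hcIc⟩ with hSc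
  set cl := Stmt12Helper.cols a b c Sa Sb Sc with hcl
  have hca : (cl a).1 = Ia := by rw [hcl]; simp [Stmt12Helper.cols, hSa]
  have hcb : (cl b).1 = Ib := by rw [hcl]; simp [Stmt12Helper.cols, hne_ba, hSb]
  have hcc : (cl c).1 = Ic := by rw [hcl]; simp [Stmt12Helper.cols, hne_ca, hne_cb, hSc]
  have hco : ∀ y, ¬(y = a ∨ y = b ∨ y = c) → (cl y).1 = {z | z ≤ y} := by
    intro y hy
    push_neg at hy
    rw [hcl]; simp [Stmt12Helper.cols, hy.1, hy.2.1, hy.2.2]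
  obtain ⟨σ, hσ⟩ := exists_monotone_equiv α
  set M : Matrix α α ℤ := Matrix.of fun x y => Set.indicator (cl y).1 (1 : α → ℤ) x with hM
  set N : Matrix α α ℤ := Zinv σ * M with hN
  have hdetMN : M.det = N.det := by
    have h1 : M = Zeta α * N := by
      rw [hN, ← Matrix.mul_assoc, zeta_mul_zinv σ hσ, Matrix.one_mul]
    calc M.det = (Zeta α * N).det := by rw [← h1]
      _ = (Zeta α).det * N.det := Matrix.det_mul _ _
      _ = N.det := by rw [det_zeta σ hσ, one_mul]
  have hNcol : ∀ y : α, ¬(y = a ∨ y = b ∨ y = c) → ∀ x, N x y = (1 : Matrix α α ℤ) x y := by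
    intro y hy x
    have hMc : ∀ z, M z y = Zeta α z y := by
      intro z
      rw [hM]
      simp only [Matrix.of_apply, Zeta]
      rw [hco y hy]
    rw [hN, Matrix.mul_apply]
    have hstep : ∑ z : α, Zinv σ x z * M z y = ∑ z : α, Zinv σ x z * Zeta α z y :=
      Finset.sum_congr rfl fun z _ => by rw [hMc z]
    rw [hstep, ← Matrix.mul_apply, zinv_mul_zeta σ hσ]
  -- the columns at a, b, c
  have hMcol_a : ∀ z, M z a = Ia.indicator (1 : α → ℤ) z := fun z => by
    rw [hM]; simp only [Matrix.of_apply]; rw [hca]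
  have hMcol_b : ∀ z, M z b = Ib.indicator (1 : α → ℤ) z := fun z => by
    rw [hM]; simp only [Matrix.of_apply]; rw [hcb]
  have hMcol_c : ∀ z, M z c = Ic.indicator (1 : α → ℤ) z := fun z => by
    rw [hM]; simp only [Matrix.of_apply]; rw [hcc]
  -- the nine entries of N on {a,b,c} × {a,b,c}
  have hNaa : N a a = 1 := by
    rw [hN, Matrix.mul_apply]
    rw [Finset.sum_congr rfl (fun z _ => by rw [hMcol_a z] :
      ∀ z ∈ Finset.univ, Zinv σ a z * M z a = Zinv σ a z * Ia.indicator (1 : α → ℤ) z)]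
    refine sum_indicator_eq_one σ hσ a Ia (fun z hz => ⟨Or.inl hz, fun hzc => hac2 (hzc ▸ hz)⟩) ?_
    rintro z ⟨h1 | h1 | h1, h2⟩ hxz
    · exact h1
    · exact absurd (hxz.trans h1) hab1
    · exact absurd (hxz.trans h1) hac1
  have hNba : N b a = 1 := by
    rw [hN, Matrix.mul_apply]
    rw [Finset.sum_congr rfl (fun z _ => by rw [hMcol_a z] :
      ∀ z ∈ Finset.univ, Zinv σ b z * M z a = Zinv σ b z * Ia.indicator (1 : α → ℤ) z)]
    refine sum_indicator_eq_one σ hσ b Ia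
      (fun z hz => ⟨Or.inr (Or.inl hz), fun hzc => hbc2 (hzc ▸ hz)⟩) ?_
    rintro z ⟨h1 | h1 | h1, h2⟩ hxz
    · exact absurd (hxz.trans h1) hab2
    · exact h1
    · exact absurd (hxz.trans h1) hbc1
  have hNca : N c a = 0 := by
    rw [hN, Matrix.mul_apply]
    rw [Finset.sum_congr rfl (fun z _ => by rw [hMcol_a z] :
      ∀ z ∈ Finset.univ, Zinv σ c z * M z a = Zinv σ c z * Ia.indicator (1 : α → ℤ) z)]
    refine sum_indicator_eq_zero σ c Ia ?_
    rintro z ⟨h1 | h1 | h1, h2⟩ hxz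
    · exact hac2 (hxz.trans h1)
    · exact hbc2 (hxz.trans h1)
    · exact h2 (le_antisymm h1 hxz)
  have hNab : N a b = 0 := by
    rw [hN, Matrix.mul_apply]
    rw [Finset.sum_congr rfl (fun z _ => by rw [hMcol_b z] :
      ∀ z ∈ Finset.univ, Zinv σ a z * M z b = Zinv σ a z * Ib.indicator (1 : α → ℤ) z)]
    refine sum_indicator_eq_zero σ a Ib ?_
    rintro z ⟨h1 | h1 | h1, h2⟩ hxz
    · exact h2 (le_antisymm h1 hxz)
    · exact hab1 (hxz.trans h1)
    · exact hac1 (hxz.trans h1)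
  have hNbb : N b b = 1 := by
    rw [hN, Matrix.mul_apply]
    rw [Finset.sum_congr rfl (fun z _ => by rw [hMcol_b z] :
      ∀ z ∈ Finset.univ, Zinv σ b z * M z b = Zinv σ b z * Ib.indicator (1 : α → ℤ) z)]
    refine sum_indicator_eq_one σ hσ b Ib
      (fun z hz => ⟨Or.inr (Or.inl hz), fun hza => hab1 (hza ▸ hz)⟩) ?_
    rintro z ⟨h1 | h1 | h1, h2⟩ hxz
    · exact absurd (hxz.trans h1) hab2
    · exact h1
    · exact absurd (hxz.trans h1) hbc1
  have hNcb : N c b = 1 := by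
    rw [hN, Matrix.mul_apply]
    rw [Finset.sum_congr rfl (fun z _ => by rw [hMcol_b z] :
      ∀ z ∈ Finset.univ, Zinv σ c z * M z b = Zinv σ c z * Ib.indicator (1 : α → ℤ) z)]
    refine sum_indicator_eq_one σ hσ c Ib
      (fun z hz => ⟨Or.inr (Or.inr hz), fun hza => hac1 (hza ▸ hz)⟩) ?_
    rintro z ⟨h1 | h1 | h1, h2⟩ hxz
    · exact absurd (hxz.trans h1) hac2
    · exact absurd (hxz.trans h1) hbc2
    · exact h1
  have hNac : N a c = 1 := by
    rw [hN, Matrix.mul_apply]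
    rw [Finset.sum_congr rfl (fun z _ => by rw [hMcol_c z] :
      ∀ z ∈ Finset.univ, Zinv σ a z * M z c = Zinv σ a z * Ic.indicator (1 : α → ℤ) z)]
    refine sum_indicator_eq_one σ hσ a Ic
      (fun z hz => ⟨Or.inl hz, fun hzb => hab2 (hzb ▸ hz)⟩) ?_
    rintro z ⟨h1 | h1 | h1, h2⟩ hxz
    · exact h1
    · exact absurd (hxz.trans h1) hab1
    · exact absurd (hxz.trans h1) hac1
  have hNbc : N b c = 0 := by
    rw [hN, Matrix.mul_apply]
    rw [Finset.sum_congr rfl (fun z _ => by rw [hMcol_c z] :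
      ∀ z ∈ Finset.univ, Zinv σ b z * M z c = Zinv σ b z * Ic.indicator (1 : α → ℤ) z)]
    refine sum_indicator_eq_zero σ b Ic ?_
    rintro z ⟨h1 | h1 | h1, h2⟩ hxz
    · exact hab2 (hxz.trans h1)
    · exact h2 (le_antisymm h1 hxz)
    · exact hbc1 (hxz.trans h1)
  have hNcc : N c c = 1 := by
    rw [hN, Matrix.mul_apply]
    rw [Finset.sum_congr rfl (fun z _ => by rw [hMcol_c z] :
      ∀ z ∈ Finset.univ, Zinv σ c z * M z c = Zinv σ c z * Ic.indicator (1 : α → ℤ) z)]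
    refine sum_indicator_eq_one σ hσ c Ic
      (fun z hz => ⟨Or.inr (Or.inr hz), fun hzb => hbc1 (hzb.symm.trans_le hz)⟩) ?_
    rintro z ⟨h1 | h1 | h1, h2⟩ hxz
    · exact absurd (hxz.trans h1) hac2
    · exact absurd (hxz.trans h1) hbc2
    · exact h1
  -- block decomposition
  have hpa : a = a ∨ a = b ∨ a = c := Or.inl rfl
  have hpb : b = a ∨ b = b ∨ b = c := Or.inr (Or.inl rfl)
  have hpc : c = a ∨ c = b ∨ c = c := Or.inr (Or.inr rfl)
  let e : {x : α // x = a ∨ x = b ∨ x = c} ⊕ {x : α // ¬(x = a ∨ x = b ∨ x = c)} ≃ α :=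
    Equiv.sumCompl _
  set Q := N.submatrix e e with hQ
  have hdetQ : N.det = Q.det := by
    rw [hQ]; exact (Matrix.det_submatrix_equiv_self e N).symm
  have h12 : Q.toBlocks₁₂ = 0 := by
    ext i j
    have h1 := hNcol j.1 j.2 i.1
    have hnij : i.1 ≠ j.1 := fun hc => j.2 (hc ▸ i.2)
    simp only [Matrix.toBlocks₁₂, Matrix.of_apply, hQ, Matrix.submatrix_apply,
      Equiv.sumCompl_apply_inl, Equiv.sumCompl_apply_inr, Matrix.zero_apply, e]
    rw [h1, Matrix.one_apply_ne hnij]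
  have h22 : Q.toBlocks₂₂ = 1 := by
    ext i j
    have h1 := hNcol j.1 j.2 i.1
    simp only [Matrix.toBlocks₂₂, Matrix.of_apply, hQ, Matrix.submatrix_apply,
      Equiv.sumCompl_apply_inr, e]
    rw [h1]
    by_cases hij : i = j
    · subst hij; rw [Matrix.one_apply_eq, Matrix.one_apply_eq]
    · rw [Matrix.one_apply_ne (fun hc => hij (Subtype.ext hc)), Matrix.one_apply_ne hij]
  have hQdet : Q.det = Q.toBlocks₁₁.det := by
    conv_lhs => rw [← Matrix.fromBlocks_toBlocks Q, h12, h22]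
    rw [Matrix.det_fromBlocks_zero₁₂, Matrix.det_one, mul_one]
  -- the 3×3 block has determinant 2
  let g : Fin 3 → {x : α // x = a ∨ x = b ∨ x = c} := ![⟨a, hpa⟩, ⟨b, hpb⟩, ⟨c, hpc⟩]
  have hg : Function.Bijective g := by
    constructor
    · intro i j hij
      fin_cases i <;> fin_cases j <;>
        simp [g, Subtype.ext_iff, hne_ab, hne_ba, hne_ac, hne_ca, hne_bc, hne_cb] at hij ⊢
    · rintro ⟨x, hx | hx | hx⟩
      · exact ⟨0, by simp only [g, Matrix.cons_val_zero]; exact Subtype.ext hx.symm⟩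
      · exact ⟨1, by simp only [g, Matrix.cons_val_one, Matrix.head_cons]; exact Subtype.ext hx.symm⟩
      · exact ⟨2, by simp only [g]; exact Subtype.ext hx.symm⟩
  let gE : Fin 3 ≃ {x : α // x = a ∨ x = b ∨ x = c} := Equiv.ofBijective g hg
  have h11 : Q.toBlocks₁₁.det = 2 := by
    have hdet2 : (Q.toBlocks₁₁.submatrix gE gE).det = Q.toBlocks₁₁.det :=
      Matrix.det_submatrix_equiv_self gE _
    rw [← hdet2]
    have hmat : Q.toBlocks₁₁.submatrix gE gE = !![1, 0, 1; 1, 1, 0; 0, 1, 1] := by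
      ext i j
      fin_cases i <;> fin_cases j <;>
        simp [Matrix.toBlocks₁₁, gE, g, Matrix.submatrix_apply, hQ,
          Equiv.sumCompl_apply_inl, Equiv.ofBijective, e,
          hNaa, hNab, hNac, hNba, hNbb, hNbc, hNca, hNcb, hNcc,
          Matrix.vecHead, Matrix.vecTail]
    rw [hmat]
    rw [Matrix.det_fin_three]; decide
  have main : M.det = 2 := by rw [hdetMN, hdetQ, hQdet, h11]
  refine ⟨cl, ?_, ?_, ?_⟩ <;> rw [← hM, main] <;> norm_num
end
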